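/- Let m ≥ 3 be an integer and let j, k be integers with 1 ≤ k ≤ j < (m+2)/2 and j ≠ 1. Then ∫₀^∞ ( t^{mk−j}/(1+t^m)^{k−1/2} − t^{m/2 − j} ) dt = (1/m) · B(k − (j−1)/m, (j−1)/m − 1/2). -/

import Mathlib

open Real MeasureTheory Set

open Filter Topology

noncomputable def realBeta (x y : ℝ) : ℝ := Real.Gamma x * Real.Gamma y / Real.Gamma (x + y)

lemma realBeta_intervalIntegral {a b : ℝ} (ha : 0 < a) (hb : 0 < b) :
    ∫ u in (0:ℝ)..1, u ^ (a - 1) * (1 - u) ^ (b - 1) = realBeta a b := by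
  have h := Complex.Gamma_mul_Gamma_eq_betaIntegral (s := (a:ℂ)) (t := (b:ℂ))
    (by simpa using ha) (by simpa using hb)
  have hint : Complex.betaIntegral a b =
      ((∫ u in (0:ℝ)..1, u ^ (a - 1) * (1 - u) ^ (b - 1) : ℝ) : ℂ) := by
    rw [Complex.betaIntegral, ← intervalIntegral.integral_ofReal]
    refine intervalIntegral.integral_congr fun x hx => ?_
    rw [uIcc_of_le zero_le_one] at hx
    rw [Complex.ofReal_mul, Complex.ofReal_cpow hx.1, Complex.ofReal_cpow (by linarith [hx.2] : (0:ℝ) ≤ 1 - x)]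
    push_cast
    ring
  rw [hint, ← Complex.ofReal_add, Complex.Gamma_ofReal, Complex.Gamma_ofReal,
    Complex.Gamma_ofReal, ← Complex.ofReal_mul, ← Complex.ofReal_mul] at h
  have := Complex.ofReal_inj.mp h
  have hΓ : Real.Gamma (a + b) ≠ 0 := (Real.Gamma_pos_of_pos (by linarith)).ne'
  rw [realBeta]
  field_simp
  linarith [this]

lemma image_self_div : (fun u : ℝ => u / (1 - u)) '' Ioo 0 1 = Ioi 0 := by
  ext s
  constructor
  · rintro ⟨u, ⟨hu0, hu1⟩, rfl⟩
    exact div_pos hu0 (by linarith)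
  · intro hs
    refine ⟨s / (1 + s), ⟨div_pos hs (by linarith [hs.out]), ?_⟩, ?_⟩
    · rw [div_lt_one (by linarith [hs.out])]; linarith [hs.out]
    · have h1 : (0:ℝ) < 1 + s := by linarith [hs.out]
      field_simp; ring

lemma beta_Ioi {a b : ℝ} (ha : 0 < a) (hb : 0 < b) :
    ∫ s in Ioi (0:ℝ), s ^ (a - 1) * (1 + s) ^ (-(a + b)) =
      ∫ u in (0:ℝ)..1, u ^ (a - 1) * (1 - u) ^ (b - 1) := by
  have hderiv : ∀ u ∈ Ioo (0:ℝ) 1,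
      HasDerivWithinAt (fun u : ℝ => u / (1 - u)) (((1 - u) ^ 2)⁻¹) (Ioo 0 1) u := by
    intro u hu
    have h1 : (1:ℝ) - u ≠ 0 := by have := hu.2; intro h; rw [sub_eq_zero] at h; linarith
    have : HasDerivAt (fun u : ℝ => u / (1 - u)) (((1 - u) ^ 2)⁻¹) u := by
      have := (hasDerivAt_id u).div ((hasDerivAt_id u).const_sub 1) h1
      convert this using 1
      all_goals first | rfl | (simp only [id]; field_simp; ring)
    exact this.hasDerivWithinAt
  have hinj : InjOn (fun u : ℝ => u / (1 - u)) (Ioo 0 1) := by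
    intro u hu v hv h
    have h1 : (1:ℝ) - u ≠ 0 := by have := hu.2; intro h; rw [sub_eq_zero] at h; linarith
    have h2 : (1:ℝ) - v ≠ 0 := by have := hv.2; intro h; rw [sub_eq_zero] at h; linarith
    field_simp at h
    nlinarith [h]
  have := integral_image_eq_integral_abs_deriv_smul measurableSet_Ioo hderiv hinj
    (fun s => s ^ (a - 1) * (1 + s) ^ (-(a + b)))
  rw [image_self_div] at this
  rw [this, intervalIntegral.integral_of_le zero_le_one, integral_Ioc_eq_integral_Ioo]
  refine setIntegral_congr_fun measurableSet_Ioo fun u hu => ?_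
  have hu0 := hu.1
  have hu1 : (0:ℝ) < 1 - u := by linarith [hu.2]
  have key : 1 + u / (1 - u) = (1 - u)⁻¹ := by field_simp; ring
  have e1 : (((1-u):ℝ)^(2:ℕ))⁻¹ = (1-u)^(-2:ℝ) := by
    rw [← Real.rpow_natCast (1-u) 2, ← Real.rpow_neg hu1.le]; norm_num
  have e2 : (((1-u):ℝ)⁻¹)^(-(a+b)) = (1-u)^(a+b) := by
    rw [← Real.rpow_neg_one (1-u), ← Real.rpow_mul hu1.le, neg_one_mul, neg_neg]
  have e3 : u^(a-1)/(1-u)^(a-1) = u^(a-1) * (1-u)^(-(a-1)) := by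
    rw [Real.rpow_neg hu1.le, div_eq_mul_inv]
  have comb : (1-u)^(-(a-1):ℝ) * ((1-u)^(a+b) * (1-u)^(-2:ℝ)) = (1-u)^(b-1) := by
    rw [← Real.rpow_add hu1, ← Real.rpow_add hu1]; congr 1; ring
  rw [smul_eq_mul, key, abs_of_pos (by positivity), div_rpow hu0.le hu1.le, e1, e2, e3, ← comb]
  ring

lemma beta_Ioi_pow {a b : ℝ} {m : ℕ} (hm : 0 < m) :
    ∫ t in Ioi (0:ℝ), t ^ ((m:ℝ) * a - 1) * (1 + t ^ m) ^ (-(a + b)) =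
      (1/(m:ℝ)) * ∫ s in Ioi (0:ℝ), s ^ (a - 1) * (1 + s) ^ (-(a + b)) := by
  have hm0 : ((m:ℝ)) ≠ 0 := Nat.cast_ne_zero.mpr hm.ne'
  have hm' : (0:ℝ) < m := by exact_mod_cast hm
  rw [← integral_comp_rpow_Ioi (fun s => s ^ (a - 1) * (1 + s) ^ (-(a + b))) hm0,
    ← integral_const_mul]
  refine setIntegral_congr_fun measurableSet_Ioi fun t ht => ?_
  have ht : (0:ℝ) < t := ht
  simp only [smul_eq_mul]
  have e1 : (t ^ ((m:ℝ))) ^ (a-1) = t ^ ((m:ℝ)*(a-1)) := (Real.rpow_mul ht.le _ _).symm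
  have e0 : t ^ ((m:ℝ)) = t ^ m := Real.rpow_natCast t m
  have e2 : t ^ ((m:ℝ)-1) * t ^ ((m:ℝ)*(a-1)) = t ^ ((m:ℝ)*a-1) := by
    rw [← Real.rpow_add ht]; congr 1; ring
  rw [e1, e0, abs_of_pos hm', ← e2]
  field_simp

lemma rpow_neg_sub_le {c x y : ℝ} (hc : 0 < c) (hx : 0 < x) (hxy : x < y) :
    x ^ (-c) - y ^ (-c) ≤ c * x ^ (-c - 1) * (y - x) := by
  have hcont : ContinuousOn (fun t : ℝ => t ^ (-c)) (Icc x y) := by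
    intro t htm
    exact (Real.continuousAt_rpow_const t (-c) (Or.inl (by linarith [htm.1]))).continuousWithinAt
  have hderiv : ∀ t ∈ Ioo x y, HasDerivAt (fun t : ℝ => t ^ (-c)) (-c * t ^ (-c - 1)) t :=
    fun t htm => Real.hasDerivAt_rpow_const (Or.inl (by linarith [htm.1]))
  obtain ⟨ξ, hξ, hs⟩ := exists_hasDerivAt_eq_slope (fun t : ℝ => t ^ (-c))
    (fun t => -c * t ^ (-c - 1)) hxy hcont hderiv
  have hle : ξ ^ (-c - 1) ≤ x ^ (-c - 1) :=
    Real.rpow_le_rpow_of_nonpos hx hξ.1.le (by linarith)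
  have hyx : (0:ℝ) < y - x := by linarith
  have : x ^ (-c) - y ^ (-c) = c * ξ ^ (-c - 1) * (y - x) := by
    field_simp at hs
    nlinarith [hs]
  rw [this]
  exact mul_le_mul_of_nonneg_right (mul_le_mul_of_nonneg_left hle hc.le) hyx.le

section
variable {a b p e : ℝ} {m : ℕ}

-- derivative of the antiderivative G
lemma hasDerivAt_G (hm : 0 < m) (hb0 : b ≠ 0) {t : ℝ} (ht : 0 < t) :
    HasDerivAt (fun t : ℝ => (1/((m:ℝ)*b)) *
        (t ^ (-(m:ℝ)*b) - t ^ ((m:ℝ)*a) * (1 + t ^ m) ^ (-(a+b))))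
      ((t ^ ((m:ℝ)*a - 1) * (1 + t ^ m) ^ (-(a+b)) - t ^ (-(m:ℝ)*b - 1))
        - ((a+b)/b) * (t ^ ((m:ℝ)*a - 1) * (1 + t ^ m) ^ (-(a+b) - 1))) t := by
  have hm0 : ((m:ℝ)) ≠ 0 := Nat.cast_ne_zero.mpr hm.ne'
  have hy : (0:ℝ) < 1 + t ^ m := by positivity
  have d1 : HasDerivAt (fun t : ℝ => t ^ (-(m:ℝ)*b)) ((-(m:ℝ)*b) * t ^ (-(m:ℝ)*b - 1)) t :=
    Real.hasDerivAt_rpow_const (Or.inl ht.ne')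
  have d4 : HasDerivAt (fun t : ℝ => t ^ ((m:ℝ)*a)) (((m:ℝ)*a) * t ^ ((m:ℝ)*a - 1)) t :=
    Real.hasDerivAt_rpow_const (Or.inl ht.ne')
  have d2 : HasDerivAt (fun t : ℝ => 1 + t ^ m) ((m:ℝ) * t ^ (m-1)) t := by
    simpa using (hasDerivAt_pow m t).const_add 1
  have d3 : HasDerivAt (fun t : ℝ => (1 + t ^ m) ^ (-(a+b)))
      (((m:ℝ) * t ^ (m-1)) * (-(a+b)) * (1 + t ^ m) ^ (-(a+b) - 1)) t :=
    d2.rpow_const (Or.inl hy.ne')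
  have d5 := (d1.sub (d4.mul d3)).const_mul (1/((m:ℝ)*b))
  convert d5 using 1 <;> try rfl
  -- key algebraic identity
  have ea : t ^ ((m:ℝ)*a) * (t:ℝ) ^ ((m-1:ℕ)) = t ^ ((m:ℝ)*a - 1 + (m:ℝ)) := by
    rw [← Real.rpow_natCast t (m-1), ← Real.rpow_add ht]
    congr 1
    push_cast [Nat.cast_sub hm]
    ring
  have eb : t ^ ((m:ℝ)*a - 1 + (m:ℝ)) * (1 + t ^ m) ^ (-(a+b) - 1) =
      t ^ ((m:ℝ)*a - 1) * (1 + t ^ m) ^ (-(a+b)) -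
        t ^ ((m:ℝ)*a - 1) * (1 + t ^ m) ^ (-(a+b) - 1) := by
    rw [Real.rpow_add ht, Real.rpow_natCast]
    have h1 : ((1 + t ^ m :ℝ)) ^ (-(a+b)) = (1 + t ^ m) * (1 + t ^ m) ^ (-(a+b) - 1) := by
      have h2 := Real.rpow_add hy 1 (-(a+b)-1)
      rw [Real.rpow_one] at h2
      rw [← h2]
      congr 1
      ring
    rw [mul_assoc]
    rw [show (t:ℝ)^m * (1 + t ^ m) ^ (-(a+b) - 1)
        = (1 + t ^ m) * (1 + t ^ m) ^ (-(a+b) - 1) - (1 + t ^ m) ^ (-(a+b) - 1) by ring, ← h1]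
    ring
  have key : t ^ ((m:ℝ)*a) * (((m:ℝ) * t ^ (m-1)) * (-(a+b)) * (1 + t ^ m) ^ (-(a+b) - 1)) =
      (-(a+b)*(m:ℝ)) * (t ^ ((m:ℝ)*a - 1) * (1 + t ^ m) ^ (-(a+b)) -
        t ^ ((m:ℝ)*a - 1) * (1 + t ^ m) ^ (-(a+b) - 1)) := by
    calc t ^ ((m:ℝ)*a) * (((m:ℝ) * t ^ (m-1)) * (-(a+b)) * (1 + t ^ m) ^ (-(a+b) - 1))
        = (-(a+b)*(m:ℝ)) * ((t ^ ((m:ℝ)*a) * (t:ℝ) ^ ((m-1:ℕ))) * (1 + t ^ m) ^ (-(a+b) - 1)) := by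
          ring
      _ = _ := by rw [ea, eb]
  rw [mul_sub, key]
  field_simp
  ring

lemma contOn_mul_rpow (p e : ℝ) (m : ℕ) :
    ContinuousOn (fun t : ℝ => t ^ p * (1 + t ^ m) ^ e) (Ioi (0:ℝ)) := by
  intro t ht
  have ht' : (0:ℝ) < t := ht
  have hy : (0:ℝ) < 1 + t ^ m := by have := pow_pos ht' m; linarith
  exact ((Real.continuousAt_rpow_const t p (Or.inl ht'.ne')).mul
    (((continuous_const.add (continuous_pow m)).continuousAt).rpow_const
      (Or.inl hy.ne'))).continuousWithinAt

lemma integrableOn_rpow_Ioc {r : ℝ} (hr : -1 < r) :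
    IntegrableOn (fun t : ℝ => t ^ r) (Ioc (0:ℝ) 1) :=
  (intervalIntegrable_iff_integrableOn_Ioc_of_le zero_le_one).mp
    (intervalIntegral.intervalIntegrable_rpow' hr)

lemma integrableOn_mul_rpow_Ioc (hp : -1 < p) (he : e ≤ 0) :
    IntegrableOn (fun t : ℝ => t ^ p * (1 + t ^ m) ^ e) (Ioc (0:ℝ) 1) := by
  refine Integrable.mono' (integrableOn_rpow_Ioc hp)
    (((contOn_mul_rpow p e m).mono Ioc_subset_Ioi_self).aestronglyMeasurable measurableSet_Ioc) ?_
  rw [ae_restrict_iff' measurableSet_Ioc]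
  refine Eventually.of_forall fun t htm => ?_
  have ht : (0:ℝ) < t := htm.1
  have hy : (1:ℝ) ≤ 1 + t ^ m := by have := pow_pos ht m; linarith
  rw [Real.norm_eq_abs, abs_of_nonneg (by positivity)]
  calc t ^ p * (1 + t ^ m) ^ e ≤ t ^ p * 1 :=
        mul_le_mul_of_nonneg_left (Real.rpow_le_one_of_one_le_of_nonpos hy he)
          (Real.rpow_nonneg ht.le p)
    _ = t ^ p := mul_one _

lemma rpow_tail_eq {t : ℝ} (ht : 0 < t) (p e : ℝ) (m : ℕ) :
    t ^ p * ((t ^ m : ℝ)) ^ e = t ^ (p + (m:ℝ) * e) := by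
  rw [← Real.rpow_natCast t m, ← Real.rpow_mul ht.le, ← Real.rpow_add ht]

lemma integrableOn_mul_rpow_Ioi (hm : 0 < m) (hp : -1 < p) (he : e ≤ 0)
    (htail : p + (m:ℝ) * e < -1) :
    IntegrableOn (fun t : ℝ => t ^ p * (1 + t ^ m) ^ e) (Ioi (0:ℝ)) := by
  rw [← Ioc_union_Ioi_eq_Ioi (zero_le_one' ℝ)]
  refine (integrableOn_mul_rpow_Ioc hp he).union ?_
  refine Integrable.mono' (integrableOn_Ioi_rpow_of_lt htail one_pos)
    (((contOn_mul_rpow p e m).mono (Ioi_subset_Ioi zero_le_one)).aestronglyMeasurable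
      measurableSet_Ioi) ?_
  rw [ae_restrict_iff' measurableSet_Ioi]
  refine Eventually.of_forall fun t htm => ?_
  have ht : (0:ℝ) < t := lt_trans one_pos htm
  have hX : (0:ℝ) < t ^ m := pow_pos ht m
  rw [Real.norm_eq_abs, abs_of_nonneg (by positivity), ← rpow_tail_eq ht p e m]
  exact mul_le_mul_of_nonneg_left (Real.rpow_le_rpow_of_nonpos hX (by linarith) he)
    (Real.rpow_nonneg ht.le p)

lemma rpow_neg_sub_le_one {c x : ℝ} (hc : 0 < c) (hx : 0 < x) :
    x ^ (-c) - (1 + x) ^ (-c) ≤ c * x ^ (-c - 1) := by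
  have h := rpow_neg_sub_le hc hx (show x < 1 + x by linarith)
  rwa [show (1 + x - x : ℝ) = 1 by ring, mul_one] at h

lemma integrableOn_F (hm : 0 < m) (ha : 0 < a) (hb0 : b < 0) (hb1 : -1 < b) (hab : 0 < a+b) :
    IntegrableOn (fun t : ℝ => t ^ ((m:ℝ)*a - 1) * (1 + t ^ m) ^ (-(a+b)) - t ^ (-(m:ℝ)*b - 1))
      (Ioi (0:ℝ)) := by
  have hm' : (0:ℝ) < m := Nat.cast_pos.mpr hm
  have hp : (-1:ℝ) < (m:ℝ)*a - 1 := by nlinarith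
  have hq : (-1:ℝ) < -(m:ℝ)*b - 1 := by nlinarith
  have hcont : ContinuousOn
      (fun t : ℝ => t ^ ((m:ℝ)*a - 1) * (1 + t ^ m) ^ (-(a+b)) - t ^ (-(m:ℝ)*b - 1))
      (Ioi (0:ℝ)) := by
    refine (contOn_mul_rpow _ _ m).sub fun t ht => ?_
    exact (Real.continuousAt_rpow_const t _ (Or.inl (ne_of_gt ht))).continuousWithinAt
  rw [← Ioc_union_Ioi_eq_Ioi (zero_le_one' ℝ)]
  refine IntegrableOn.union
    ((integrableOn_mul_rpow_Ioc hp (by linarith)).sub (integrableOn_rpow_Ioc hq)) ?_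
  refine Integrable.mono'
    ((integrableOn_Ioi_rpow_of_lt (show -(m:ℝ)*b - 1 - m < -1 by nlinarith) one_pos).const_mul
      (a+b))
    ((hcont.mono (Ioi_subset_Ioi zero_le_one)).aestronglyMeasurable measurableSet_Ioi) ?_
  rw [ae_restrict_iff' measurableSet_Ioi]
  refine Eventually.of_forall fun t ht1 => ?_
  have ht : (0:ℝ) < t := lt_trans one_pos ht1
  have hX : (0:ℝ) < t ^ m := pow_pos ht m
  have hA : (0:ℝ) ≤ t ^ ((m:ℝ)*a - 1) := Real.rpow_nonneg ht.le _
  have tq_eq : t ^ (-(m:ℝ)*b - 1) = t ^ ((m:ℝ)*a - 1) * ((t^m : ℝ)) ^ (-(a+b)) := by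
    rw [rpow_tail_eq ht, show ((m:ℝ)*a - 1 + (m:ℝ)*(-(a+b))) = -(m:ℝ)*b - 1 by ring]
  have horder : ((1 + t^m : ℝ)) ^ (-(a+b)) ≤ ((t^m : ℝ)) ^ (-(a+b)) :=
    Real.rpow_le_rpow_of_nonpos hX (by linarith) (by linarith)
  have hmono := rpow_neg_sub_le_one hab hX
  rw [Real.norm_eq_abs, tq_eq, abs_of_nonpos (by nlinarith)]
  calc -(t ^ ((m:ℝ)*a - 1) * (1 + t ^ m) ^ (-(a+b)) -
          t ^ ((m:ℝ)*a - 1) * ((t^m : ℝ)) ^ (-(a+b)))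
      = t ^ ((m:ℝ)*a - 1) * (((t^m : ℝ)) ^ (-(a+b)) - (1 + t ^ m) ^ (-(a+b))) := by ring
    _ ≤ t ^ ((m:ℝ)*a - 1) * ((a+b) * ((t^m : ℝ)) ^ (-(a+b) - 1)) :=
        mul_le_mul_of_nonneg_left hmono hA
    _ = (a+b) * (t ^ ((m:ℝ)*a - 1) * ((t^m : ℝ)) ^ (-(a+b) - 1)) := by ring
    _ = (a+b) * t ^ (-(m:ℝ)*b - 1 - m) := by
        rw [rpow_tail_eq ht, show ((m:ℝ)*a - 1 + (m:ℝ)*(-(a+b) - 1)) = -(m:ℝ)*b - 1 - m by ring]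

lemma tendsto_G_atTop (hm : 0 < m) (hb0 : b < 0) (hb1 : -1 < b) (hab : 0 < a+b) :
    Tendsto (fun t : ℝ => (1/((m:ℝ)*b)) *
      (t ^ (-(m:ℝ)*b) - t ^ ((m:ℝ)*a) * (1 + t ^ m) ^ (-(a+b)))) atTop (𝓝 0) := by
  have hm' : (0:ℝ) < m := Nat.cast_pos.mpr hm
  have hnb : (0:ℝ) < -b := by linarith
  have hconst : (0:ℝ) < 1/((m:ℝ)*(-b)) := by positivity
  refine squeeze_zero_norm'
    (a := fun t => (1/((m:ℝ)*(-b)) * (a+b)) * t ^ (-((m:ℝ)*(b+1)))) ?_ ?_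
  · filter_upwards [eventually_ge_atTop (1:ℝ)] with t ht1
    have ht : (0:ℝ) < t := lt_of_lt_of_le one_pos ht1
    have hX : (0:ℝ) < t ^ m := pow_pos ht m
    have e1 : t ^ (-(m:ℝ)*b) = t ^ ((m:ℝ)*a) * ((t^m : ℝ)) ^ (-(a+b)) := by
      rw [rpow_tail_eq ht, show ((m:ℝ)*a + (m:ℝ)*(-(a+b))) = -(m:ℝ)*b by ring]
    have horder : ((1 + t^m : ℝ)) ^ (-(a+b)) ≤ ((t^m : ℝ)) ^ (-(a+b)) :=
      Real.rpow_le_rpow_of_nonpos hX (by linarith) (by linarith)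
    have hmono := rpow_neg_sub_le_one hab hX
    have hA : (0:ℝ) ≤ t ^ ((m:ℝ)*a) := Real.rpow_nonneg ht.le _
    have hmb : (m:ℝ)*b < 0 := mul_neg_of_pos_of_neg hm' hb0
    have habs : |1/((m:ℝ)*b)| = 1/((m:ℝ)*(-b)) := by
      rw [abs_of_neg (one_div_neg.mpr hmb), mul_neg, div_neg]
    rw [Real.norm_eq_abs, abs_mul, e1, habs,
      abs_of_nonneg (show (0:ℝ) ≤ t ^ ((m:ℝ)*a) * ((t^m : ℝ)) ^ (-(a+b)) -
        t ^ ((m:ℝ)*a) * (1 + t ^ m) ^ (-(a+b)) by nlinarith)]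
    calc 1/((m:ℝ)*(-b)) * (t ^ ((m:ℝ)*a) * ((t^m : ℝ)) ^ (-(a+b)) -
            t ^ ((m:ℝ)*a) * (1 + t ^ m) ^ (-(a+b)))
        = 1/((m:ℝ)*(-b)) * (t ^ ((m:ℝ)*a) *
            (((t^m : ℝ)) ^ (-(a+b)) - (1 + t ^ m) ^ (-(a+b)))) := by ring
      _ ≤ 1/((m:ℝ)*(-b)) * (t ^ ((m:ℝ)*a) * ((a+b) * ((t^m : ℝ)) ^ (-(a+b) - 1))) :=
          mul_le_mul_of_nonneg_left (mul_le_mul_of_nonneg_left hmono hA) hconst.le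
      _ = (1/((m:ℝ)*(-b)) * (a+b)) * (t ^ ((m:ℝ)*a) * ((t^m : ℝ)) ^ (-(a+b) - 1)) := by ring
      _ = (1/((m:ℝ)*(-b)) * (a+b)) * t ^ (-((m:ℝ)*(b+1))) := by
          rw [rpow_tail_eq ht, show ((m:ℝ)*a + (m:ℝ)*(-(a+b) - 1)) = -((m:ℝ)*(b+1)) by ring]
  · have := (tendsto_rpow_neg_atTop (show (0:ℝ) < (m:ℝ)*(b+1) by nlinarith)).const_mul
      (1/((m:ℝ)*(-b)) * (a+b))
    simpa using this

lemma G_cont0 (hm : 0 < m) (ha : 0 < a) (hb0 : b < 0) :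
    ContinuousWithinAt (fun t : ℝ => (1/((m:ℝ)*b)) *
      (t ^ (-(m:ℝ)*b) - t ^ ((m:ℝ)*a) * (1 + t ^ m) ^ (-(a+b)))) (Ici (0:ℝ)) 0 := by
  have hm' : (0:ℝ) < m := Nat.cast_pos.mpr hm
  apply ContinuousAt.continuousWithinAt
  have c1 : ContinuousAt (fun t : ℝ => t ^ (-(m:ℝ)*b)) 0 :=
    Real.continuousAt_rpow_const 0 _ (Or.inr (by nlinarith))
  have c2 : ContinuousAt (fun t : ℝ => t ^ ((m:ℝ)*a)) 0 :=
    Real.continuousAt_rpow_const 0 _ (Or.inr (by positivity))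
  have c3 : ContinuousAt (fun t : ℝ => (1 + t ^ m) ^ (-(a+b))) 0 :=
    ((continuous_const.add (continuous_pow m)).continuousAt).rpow_const
      (Or.inl (by norm_num [hm.ne']))
  exact continuousAt_const.mul (c1.sub (c2.mul c3))

lemma main_aux (hm : 0 < m) (ha : 0 < a) (hb0 : b < 0) (hb1 : -1 < b) (hab : 0 < a+b) :
    ∫ t in Ioi (0:ℝ), (t ^ ((m:ℝ)*a - 1) * (1 + t ^ m) ^ (-(a+b)) - t ^ (-(m:ℝ)*b - 1)) =
      (1/(m:ℝ)) * realBeta a b := by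
  have hm' : (0:ℝ) < m := Nat.cast_pos.mpr hm
  have hFint := integrableOn_F hm ha hb0 hb1 hab
  have hHint : IntegrableOn
      (fun t : ℝ => t ^ ((m:ℝ)*a - 1) * (1 + t ^ m) ^ (-(a+b) - 1)) (Ioi (0:ℝ)) :=
    integrableOn_mul_rpow_Ioi hm (by nlinarith) (by linarith) (by nlinarith)
  have h1 : (-(m:ℝ))*b ≠ 0 := ne_of_gt (by nlinarith)
  have h2 : ((m:ℝ))*a ≠ 0 := ne_of_gt (by nlinarith)
  have hFTC := integral_Ioi_of_hasDerivAt_of_tendsto (G_cont0 hm ha hb0)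
    (fun t ht => hasDerivAt_G hm hb0.ne (mem_Ioi.mp ht))
    (hFint.sub (hHint.const_mul ((a+b)/b))) (tendsto_G_atTop hm hb0 hb1 hab)
  rw [Real.zero_rpow h1, Real.zero_rpow h2,
    show (0:ℝ) - 1/((m:ℝ)*b)*(0 - 0 * (1+(0:ℝ)^m)^(-(a+b))) = 0 by ring] at hFTC
  have hsub := integral_sub hFint (hHint.const_mul ((a+b)/b))
  rw [hFTC, integral_const_mul] at hsub
  have hHval : ∫ t in Ioi (0:ℝ), t ^ ((m:ℝ)*a - 1) * (1 + t ^ m) ^ (-(a+b) - 1) =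
      (1/(m:ℝ)) * realBeta a (b+1) := by
    have e : (fun t : ℝ => t ^ ((m:ℝ)*a - 1) * (1 + t ^ m) ^ (-(a+b) - 1)) =
        fun t : ℝ => t ^ ((m:ℝ)*a - 1) * (1 + t ^ m) ^ (-(a+(b+1))) := by
      funext t
      rw [show (-(a+(b+1)) : ℝ) = -(a+b) - 1 by ring]
    rw [e, beta_Ioi_pow hm, beta_Ioi ha (by linarith), realBeta_intervalIntegral ha (by linarith)]
  have : ∫ t in Ioi (0:ℝ),
      (t ^ ((m:ℝ)*a - 1) * (1 + t ^ m) ^ (-(a+b)) - t ^ (-(m:ℝ)*b - 1)) =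
      ((a+b)/b) * ((1/(m:ℝ)) * realBeta a (b+1)) := by
    rw [← hHval]
    linarith [hsub]
  rw [this, realBeta, realBeta, Real.Gamma_add_one (show b ≠ 0 from hb0.ne),
    show a+(b+1) = (a+b)+1 by ring, Real.Gamma_add_one hab.ne']
  have hΓ : Real.Gamma (a+b) ≠ 0 := (Real.Gamma_pos_of_pos hab).ne'
  have hb' : b ≠ 0 := hb0.ne
  have hc' : a + b ≠ 0 := hab.ne'
  rw [show Real.Gamma a * (b*Real.Gamma b) / ((a+b)*Real.Gamma (a+b)) =
    (b/(a+b)) * (Real.Gamma a * Real.Gamma b / Real.Gamma (a+b)) by field_simp]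
  field_simp

end

theorem stmt_3 (m j k : ℕ) (hm : 3 ≤ m) (hk : 1 ≤ k) (hkj : k ≤ j)
    (hj : 2 * j < m + 2) (hj1 : j ≠ 1) :
    ∫ t in Ioi (0 : ℝ),
        (t ^ ((m : ℝ) * k - j) / (1 + t ^ m) ^ ((k : ℝ) - 1 / 2) - t ^ ((m : ℝ) / 2 - j)) =
      (1 / m) * realBeta ((k : ℝ) - ((j : ℝ) - 1) / m) (((j : ℝ) - 1) / m - 1 / 2) := by
  have hm0 : 0 < m := by omega
  have hm' : (0:ℝ) < m := Nat.cast_pos.mpr hm0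
  have hj2 : 2 ≤ j := by omega
  have hj2' : (2:ℝ) ≤ j := by exact_mod_cast hj2
  have hk' : (1:ℝ) ≤ k := by exact_mod_cast hk
  have hjm : 2*(j:ℝ) < m + 2 := by exact_mod_cast hj
  set a : ℝ := (k : ℝ) - ((j : ℝ) - 1) / m with ha_def
  set b : ℝ := ((j : ℝ) - 1) / m - 1 / 2 with hb_def
  have hd : ((j:ℝ) - 1) / m < 1/2 := by
    rw [div_lt_iff₀ hm']; linarith
  have hd0 : 0 < ((j:ℝ) - 1) / m := div_pos (by linarith) hm'
  have ha : 0 < a := by rw [ha_def]; linarith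
  have hb0 : b < 0 := by rw [hb_def]; linarith
  have hb1 : -1 < b := by rw [hb_def]; linarith
  have hab : 0 < a + b := by
    have : a + b = (k:ℝ) - 1/2 := by rw [ha_def, hb_def]; ring
    rw [this]; linarith
  have key := main_aux hm0 ha hb0 hb1 hab
  have e1 : (m:ℝ)*a - 1 = (m:ℝ)*k - j := by rw [ha_def]; field_simp; ring
  have e2 : -(a+b) = -((k:ℝ) - 1/2) := by rw [ha_def, hb_def]; ring
  have e3 : -(m:ℝ)*b - 1 = (m:ℝ)/2 - j := by rw [hb_def]; field_simp; ring
  have congr_int : ∫ t in Ioi (0 : ℝ),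
      (t ^ ((m : ℝ) * k - j) / (1 + t ^ m) ^ ((k : ℝ) - 1 / 2) - t ^ ((m : ℝ) / 2 - j)) =
      ∫ t in Ioi (0:ℝ), (t ^ ((m:ℝ)*a - 1) * (1 + t ^ m) ^ (-(a+b)) - t ^ (-(m:ℝ)*b - 1)) := by
    refine setIntegral_congr_fun measurableSet_Ioi fun t ht => ?_
    have ht' : (0:ℝ) < t := ht
    have hy : (0:ℝ) < 1 + t ^ m := by have := pow_pos ht' m; linarith
    rw [e1, e2, e3, Real.rpow_neg hy.le, div_eq_mul_inv]
  rw [congr_int, key]
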